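/- Let T be a (p,q)-banded matrix with nonvanishing extreme diagonals, A^{(a)}_n the left recursion polynomials, and Q_{n,N} the associated determinantal polynomials. Then for every N ∈ ℕ: (i) Q_{N+j,N} = 0 for every j ∈ {1,…,p−1}; (ii) α_N · Q_{N,N} = P_N; and (iii) (−1)^{p−1} · α_{N+1} · Q_{N+p,N} = P_{N+1}, all as identities in ℝ[x]. -/

import Mathlib

open Matrix Polynomial Equiv Finset

private lemma rotpow_val {n : ℕ} (k : ℕ) (i : Fin (n+1)) :
    ((((finRotate (n+1))^k) i : Fin (n+1)) : ℕ) = ((i:ℕ) + k) % (n+1) := by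
  induction k generalizing i with
  | zero => simp [Nat.mod_eq_of_lt i.isLt]
  | succ k ih =>
    rw [pow_succ, Equiv.Perm.mul_apply, finRotate_succ_apply, ih, Fin.add_def]
    rw [Fin.val_one']
    rw [Nat.mod_add_mod]
    conv_lhs => rw [show (i:ℕ) + 1 % (n+1) + k = ((i:ℕ)+k) + 1 % (n+1) by omega]
    conv_rhs => rw [show (i:ℕ) + (k+1) = ((i:ℕ)+k) + 1 by omega]
    rw [Nat.add_mod ((i:ℕ)+k) (1 % (n+1)), Nat.mod_mod_of_dvd _ dvd_rfl, ← Nat.add_mod]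

private lemma key
    (p' q : ℕ)
    (T : ℕ → ℕ → ℝ)
    (hband : ∀ i j, (j + (p'+1) < i ∨ i + q < j) → T i j = 0)
    (A : ℕ → ℕ → Polynomial ℝ)
    (hA0 : ∀ a, 1 ≤ a → a ≤ p'+1 → ∀ n, n < a - 1 → A a n = 0)
    (hA1 : ∀ a, 1 ≤ a → a ≤ p'+1 → A a (a - 1) = 1)
    (hArec : ∀ a, 1 ≤ a → a ≤ p'+1 → ∀ n,
      ∑ m ∈ Finset.Icc (n - q) (n + (p'+1)), A a m * Polynomial.C (T m n)
        = Polynomial.X * A a n)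
    (P : ℕ → Polynomial ℝ)
    (hP0 : P 0 = 1)
    (hPsucc : ∀ N, P (N + 1) = (Matrix.of fun i j : Fin (N + 1) => T i j).charpoly)
    (α : ℕ → ℝ)
    (hα : ∀ N, α N = (-1 : ℝ) ^ ((p'+1 - 1) * N) * ∏ k ∈ Finset.range N, T (k + (p'+1)) k)
    (Q : ℕ → ℕ → Polynomial ℝ)
    (hQ : ∀ n N, Q n N = (Matrix.of fun i a : Fin (p'+1) =>
        if (i : ℕ) = 0 then A ((a : ℕ) + 1) n else A ((a : ℕ) + 1) (N + (i : ℕ))).det) :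
    ∀ N : ℕ, Polynomial.C (α N) * Q N N = P N := by
  intro N
  -- the big square matrices, of size N + p' + 1
  set U : Matrix (Fin (N+p'+1)) (Fin (N+p'+1)) (Polynomial ℝ) :=
    fun i c => if (i:ℕ) < p'+1 then A ((i:ℕ)+1) (c:ℕ) else if ((i:ℕ) = (c:ℕ)) then 1 else 0
    with hU
  set Y : Matrix (Fin (N+p'+1)) (Fin (N+p'+1)) (Polynomial ℝ) :=
    fun i c => if (c:ℕ) < N then ((if (i:ℕ) = (c:ℕ) then X else 0) - C (T i c))
      else if (i:ℕ) = (c:ℕ) then 1 else 0 with hY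
  set τ : Equiv.Perm (Fin (N+p'+1)) := (finRotate (N+p'+1))^N with hτ
  have hτval : ∀ c : Fin (N+p'+1), ((τ c : Fin (N+p'+1)) : ℕ) = ((c:ℕ) + N) % (N+p'+1) :=
    fun c => rotpow_val N c
  set Y2 : Matrix (Fin (N+p'+1)) (Fin (N+p'+1)) (Polynomial ℝ) := Y.submatrix id τ with hY2
  -- entries of Y2
  have hY2e : ∀ i c : Fin (N+p'+1), Y2 i c =
      if (c:ℕ) < p'+1 then (if (i:ℕ) = N + (c:ℕ) then 1 else 0)
      else ((if (i:ℕ) = (c:ℕ) - (p'+1) then X else 0) - C (T i ((c:ℕ) - (p'+1)))) := by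
    intro i c
    have hc := c.isLt
    have hv := hτval c
    by_cases h : (c:ℕ) < p'+1
    · have hvv : ((τ c : Fin (N+p'+1)) : ℕ) = (c:ℕ) + N := by
        rw [hv, Nat.mod_eq_of_lt (by omega)]
      simp only [hY2, Matrix.submatrix_apply, id_eq]; simp only [hY]
      rw [if_neg (by omega), if_pos h, hvv]
      congr 1
      simp only [eq_iff_iff]; constructor <;> intro <;> omega
    · have hvv : ((τ c : Fin (N+p'+1)) : ℕ) = (c:ℕ) - (p'+1) := by
        rw [hv, show (c:ℕ) + N = ((c:ℕ) - (p'+1)) + (N+p'+1) by omega, Nat.add_mod_right]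
        exact Nat.mod_eq_of_lt (by omega)
      simp only [hY2, Matrix.submatrix_apply, id_eq]; simp only [hY]
      rw [if_neg h, if_pos (by omega), hvv]
  -- index equivalences
  set eN : Fin N ⊕ Fin (p'+1) ≃ Fin (N+p'+1) :=
    finSumFinEquiv.trans (finCongr (by omega)) with heN
  set eP : Fin (p'+1) ⊕ Fin N ≃ Fin (N+p'+1) :=
    finSumFinEquiv.trans (finCongr (by omega)) with heP
  have heNl : ∀ n : Fin N, ((eN (Sum.inl n) : Fin (N+p'+1)) : ℕ) = (n:ℕ) := by
    intro n
    simp only [heN, Equiv.trans_apply, finCongr_apply, Fin.coe_cast]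
    rw [finSumFinEquiv_apply_left]; simp
  have heNr : ∀ j : Fin (p'+1), ((eN (Sum.inr j) : Fin (N+p'+1)) : ℕ) = N + (j:ℕ) := by
    intro j
    simp only [heN, Equiv.trans_apply, finCongr_apply, Fin.coe_cast]
    rw [finSumFinEquiv_apply_right]; simp
  have hePl : ∀ a : Fin (p'+1), ((eP (Sum.inl a) : Fin (N+p'+1)) : ℕ) = (a:ℕ) := by
    intro a
    simp only [heP, Equiv.trans_apply, finCongr_apply, Fin.coe_cast]
    rw [finSumFinEquiv_apply_left]; simp
  have hePr : ∀ k : Fin N, ((eP (Sum.inr k) : Fin (N+p'+1)) : ℕ) = p'+1 + (k:ℕ) := by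
    intro k
    simp only [heP, Equiv.trans_apply, finCongr_apply, Fin.coe_cast]
    rw [finSumFinEquiv_apply_right]; simp
  -- determinant of Y is the characteristic polynomial
  have hYdet : Y.det = P N := by
    rw [← det_submatrix_equiv_self eN Y]
    have hblock : Y.submatrix eN eN =
        fromBlocks (charmatrix (Matrix.of fun i j : Fin N => T i j)) 0
          (Matrix.of fun (j : Fin (p'+1)) (n : Fin N) => Y (eN (Sum.inr j)) (eN (Sum.inl n))) 1 := by
      ext i c : 1
      rcases i with n1 | j1 <;> rcases c with n2 | j2
      · simp only [Matrix.submatrix_apply, fromBlocks_apply₁₁]; simp only [hY]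
        rw [if_pos (by rw [heNl]; exact n2.isLt), heNl, heNl, charmatrix_apply]
        simp only [Matrix.diagonal_apply, Matrix.of_apply]
        congr 2
        simp only [eq_iff_iff, Fin.val_eq_val]
      · simp only [Matrix.submatrix_apply, fromBlocks_apply₁₂, Matrix.zero_apply]; simp only [hY]
        rw [if_neg (by rw [heNr]; omega), if_neg (by rw [heNl, heNr]; have := n1.isLt; omega)]
      · simp only [Matrix.submatrix_apply, fromBlocks_apply₂₁, Matrix.of_apply]
      · simp only [Matrix.submatrix_apply, fromBlocks_apply₂₂]; simp only [hY]
        rw [if_neg (by rw [heNr]; omega), heNr, heNr]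
        simp only [Matrix.one_apply]
        by_cases h : j1 = j2
        · subst h; simp
        · rw [if_neg (fun hc => h (Fin.ext (by omega))), if_neg h]
    rw [hblock, det_fromBlocks_zero₁₂, det_one, mul_one]
    cases N with
    | zero => rw [hP0]; exact det_isEmpty
    | succ N' => rw [hPsucc N']; rfl
  -- determinant of U is 1
  have hUdet : U.det = 1 := by
    rw [← det_submatrix_equiv_self eP U]
    have hblock : U.submatrix eP eP =
        fromBlocks (Matrix.of fun a j : Fin (p'+1) => A ((a:ℕ)+1) (j:ℕ))
          (Matrix.of fun (a : Fin (p'+1)) (k : Fin N) => A ((a:ℕ)+1) ((eP (Sum.inr k) : Fin (N+p'+1)) : ℕ))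
          0 1 := by
      ext i c : 1
      rcases i with a | k <;> rcases c with j | k2
      · simp only [Matrix.submatrix_apply, fromBlocks_apply₁₁, Matrix.of_apply]; simp only [hU]
        rw [if_pos (by rw [hePl]; exact a.isLt), hePl, hePl]
      · simp only [Matrix.submatrix_apply, fromBlocks_apply₁₂, Matrix.of_apply]; simp only [hU]
        rw [if_pos (by rw [hePl]; exact a.isLt), hePl]
      · simp only [Matrix.submatrix_apply, fromBlocks_apply₂₁, Matrix.zero_apply]; simp only [hU]
        rw [if_neg (by rw [hePr]; omega), if_neg (by rw [hePr, hePl]; have := j.isLt; omega)]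
      · simp only [Matrix.submatrix_apply, fromBlocks_apply₂₂]; simp only [hU]
        rw [if_neg (by rw [hePr]; omega), hePr, hePr]
        simp only [Matrix.one_apply]
        by_cases h : k = k2
        · subst h; simp
        · rw [if_neg (fun hc => h (Fin.ext (by omega))), if_neg h]
    rw [hblock, det_fromBlocks_zero₂₁, det_one, mul_one]
    have htri : (Matrix.of fun a j : Fin (p'+1) => A ((a:ℕ)+1) (j:ℕ)).BlockTriangular id := by
      intro a j hij
      exact hA0 ((a:ℕ)+1) (by omega) (by omega) (j:ℕ) (by simpa using hij)
    rw [det_of_upperTriangular htri]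
    have : ∀ a : Fin (p'+1), (Matrix.of fun a j : Fin (p'+1) => A ((a:ℕ)+1) (j:ℕ)) a a = 1 := by
      intro a
      simp only [Matrix.of_apply]
      have := hA1 ((a:ℕ)+1) (by omega) (by omega)
      simpa using this
    rw [Finset.prod_congr rfl (fun a _ => this a)]
    exact Finset.prod_const_one
  -- rows of U with index < p'+1 annihilate the X-columns (the recursion)
  have hzero : ∀ a : ℕ, 1 ≤ a → a ≤ p'+1 → ∀ n : ℕ, n < N →
      ∑ m : Fin (N+p'+1), A a (m:ℕ) * ((if (m:ℕ) = n then X else 0) - C (T (m:ℕ) n)) = 0 := by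
    intro a ha1 ha2 n hn
    have hsplit : ∑ m : Fin (N+p'+1), A a (m:ℕ) * ((if (m:ℕ) = n then X else 0) - C (T (m:ℕ) n))
        = (∑ m : Fin (N+p'+1), A a (m:ℕ) * (if (m:ℕ) = n then X else 0))
          - ∑ m : Fin (N+p'+1), A a (m:ℕ) * C (T (m:ℕ) n) := by
      rw [← Finset.sum_sub_distrib]
      exact Finset.sum_congr rfl (fun m _ => by ring)
    rw [hsplit]
    have h1 : (∑ m : Fin (N+p'+1), A a (m:ℕ) * (if (m:ℕ) = n then X else 0)) = A a n * X := by
      rw [Finset.sum_eq_single (⟨n, by omega⟩ : Fin (N+p'+1))]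
      · simp
      · intro b _ hb
        rw [if_neg (fun hc => hb (Fin.ext (by simpa using hc))), mul_zero]
      · intro h; exact absurd (Finset.mem_univ _) h
    have hsub : Finset.Icc (n - q) (n + (p'+1)) ⊆ Finset.range (N+p'+1) := by
      intro m hm
      rw [Finset.mem_Icc] at hm
      rw [Finset.mem_range]
      omega
    have hvan : ∀ m ∈ Finset.range (N+p'+1), m ∉ Finset.Icc (n - q) (n + (p'+1)) →
        A a m * C (T m n) = 0 := by
      intro m _ hm
      rw [Finset.mem_Icc] at hm
      push_neg at hm
      have hT : T m n = 0 := by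
        rcases Nat.lt_or_ge m (n - q) with h | h
        · exact hband m n (Or.inr (by omega))
        · exact hband m n (Or.inl (by omega))
      rw [hT, map_zero, mul_zero]
    have h2 : (∑ m : Fin (N+p'+1), A a (m:ℕ) * C (T (m:ℕ) n)) = X * A a n := by
      rw [Fin.sum_univ_eq_sum_range (fun m => A a m * C (T m n)) (N+p'+1)]
      rw [← Finset.sum_subset hsub hvan]
      exact hArec a ha1 ha2 n
    rw [h1, h2]
    ring
  -- row formulas for U * Y2
  have hrowA : ∀ i : Fin (N+p'+1), (i:ℕ) < p'+1 → ∀ c,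
      (U * Y2) i c = ∑ m : Fin (N+p'+1), A ((i:ℕ)+1) (m:ℕ) * Y2 m c := by
    intro i hi c
    rw [Matrix.mul_apply]
    refine Finset.sum_congr rfl (fun m _ => ?_)
    simp only [hU]
    rw [if_pos hi]
  have hrowE : ∀ i : Fin (N+p'+1), ¬((i:ℕ) < p'+1) → ∀ c, (U * Y2) i c = Y2 i c := by
    intro i hi c
    rw [Matrix.mul_apply]
    rw [Finset.sum_eq_single i]
    · simp only [hU]
      rw [if_neg hi]
      simp
    · intro b _ hb
      simp only [hU]
      rw [if_neg hi, if_neg (fun hc => hb (Fin.ext hc).symm), zero_mul]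
    · intro h; exact absurd (Finset.mem_univ _) h
  -- the blocks of U * Y2
  set W : Matrix (Fin (p'+1)) (Fin (p'+1)) (Polynomial ℝ) :=
    Matrix.of fun a j => A ((a:ℕ)+1) (N + (j:ℕ)) with hW
  set XL : Matrix (Fin N) (Fin N) (Polynomial ℝ) :=
    Matrix.of fun k n => (if (p'+1) + (k:ℕ) = (n:ℕ) then X else 0)
      - C (T ((p'+1) + (k:ℕ)) (n:ℕ)) with hXL
  set D : Matrix (Fin N) (Fin (p'+1)) (Polynomial ℝ) :=
    Matrix.of fun k j => if (p'+1) + (k:ℕ) = N + (j:ℕ) then (1:Polynomial ℝ) else 0 with hD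
  have hprod : (U * Y2).submatrix eP eP = fromBlocks W 0 D XL := by
    ext i c : 1
    rcases i with a | k <;> rcases c with j | k2
    · simp only [Matrix.submatrix_apply, fromBlocks_apply₁₁, hW, Matrix.of_apply]
      rw [hrowA _ (by rw [hePl]; exact a.isLt), hePl]
      rw [Finset.sum_eq_single (⟨N + (j:ℕ), by omega⟩ : Fin (N+p'+1))]
      · rw [hY2e, if_pos (by rw [hePl]; exact j.isLt), hePl]
        simp
      · intro b _ hb
        rw [hY2e, if_pos (by rw [hePl]; exact j.isLt), hePl]
        rw [if_neg (fun hc => hb (Fin.ext (by simpa using hc))), mul_zero]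
      · intro h; exact absurd (Finset.mem_univ _) h
    · simp only [Matrix.submatrix_apply, fromBlocks_apply₁₂, Matrix.zero_apply]
      rw [hrowA _ (by rw [hePl]; exact a.isLt), hePl]
      have hcolv : ((eP (Sum.inr k2) : Fin (N+p'+1)) : ℕ) - (p'+1) = (k2:ℕ) := by
        rw [hePr]; omega
      have hcol : ∀ m : Fin (N+p'+1), Y2 m (eP (Sum.inr k2)) =
          (if (m:ℕ) = (k2:ℕ) then X else 0) - C (T (m:ℕ) (k2:ℕ)) := by
        intro m
        rw [hY2e, if_neg (by rw [hePr]; omega), hcolv]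
      rw [Finset.sum_congr rfl (fun m _ => by rw [hcol m])]
      exact hzero ((a:ℕ)+1) (by omega) (by omega) (k2:ℕ) k2.isLt
    · simp only [Matrix.submatrix_apply, fromBlocks_apply₂₁, hD, Matrix.of_apply]
      rw [hrowE _ (by rw [hePr]; omega), hY2e, if_pos (by rw [hePl]; exact j.isLt), hePl, hePr]
    · simp only [Matrix.submatrix_apply, fromBlocks_apply₂₂, hXL, Matrix.of_apply]
      have hcolv : ((eP (Sum.inr k2) : Fin (N+p'+1)) : ℕ) - (p'+1) = (k2:ℕ) := by
        rw [hePr]; omega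
      rw [hrowE _ (by rw [hePr]; omega), hY2e, if_neg (by rw [hePr]; omega), hcolv, hePr]
  set Pi : ℝ := ∏ k ∈ Finset.range N, T (k + (p'+1)) k with hPi
  have hUYdet : (U * Y2).det = W.det * XL.det := by
    rw [← det_submatrix_equiv_self eP (U * Y2), hprod, det_fromBlocks_zero₁₂]
  have hWdet : W.det = Q N N := by
    rw [hQ N N]
    have hWt : (Matrix.of fun i a : Fin (p'+1) =>
        if (i:ℕ) = 0 then A ((a:ℕ)+1) N else A ((a:ℕ)+1) (N + (i:ℕ))) = W.transpose := by
      ext i a : 2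
      simp only [Matrix.of_apply, Matrix.transpose_apply, hW]
      by_cases h : (i:ℕ) = 0
      · rw [if_pos h, h]; norm_num
      · rw [if_neg h]
    rw [hWt, Matrix.det_transpose]
  have hXLdet : XL.det = (-1:Polynomial ℝ)^N * C Pi := by
    have htri : XL.BlockTriangular id := by
      intro k n hkn
      simp only [hXL, Matrix.of_apply]
      have hn : (n:ℕ) < (k:ℕ) := hkn
      rw [if_neg (by omega), hband ((p'+1)+(k:ℕ)) (n:ℕ) (Or.inl (by omega)), map_zero,
        zero_sub, neg_zero]
    rw [det_of_upperTriangular htri]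
    have hdiag : ∀ n : Fin N, XL n n = (-1) * C (T ((n:ℕ) + (p'+1)) (n:ℕ)) := by
      intro n
      simp only [hXL, Matrix.of_apply]
      rw [if_neg (by omega), zero_sub]
      rw [show (p'+1) + (n:ℕ) = (n:ℕ) + (p'+1) by omega]
      ring
    rw [Finset.prod_congr rfl (fun n _ => hdiag n), Finset.prod_mul_distrib,
      Finset.prod_const, Finset.card_univ, Fintype.card_fin]
    congr 1
    rw [hPi, ← map_prod]
    congr 1
    exact Fin.prod_univ_eq_prod_range (fun k => T (k + (p'+1)) k) N
  have hY2det : Y2.det = (-1:Polynomial ℝ)^((N+p')*N) * P N := by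
    rw [hY2, Matrix.det_permute' τ Y, hYdet]
    congr 1
    have hsig : Equiv.Perm.sign τ = (-1 : ℤˣ)^((N+p')*N) := by
      rw [hτ, map_pow, sign_finRotate, ← pow_mul, Nat.add_sub_cancel]
    rw [hsig]
    push_cast
    ring
  -- assemble
  have heq0 : U.det * Y2.det = W.det * XL.det := by
    rw [← Matrix.det_mul, hUYdet]
  rw [hUdet, one_mul, hY2det, hWdet, hXLdet] at heq0
  have hCα : C (α N) = (-1:Polynomial ℝ)^(p'*N) * C Pi := by
    rw [hα N, _root_.map_mul, map_pow, map_neg, _root_.map_one, ← hPi]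
    norm_num
  have h1 : ((-1:Polynomial ℝ)^((N+p')*N)) * ((-1:Polynomial ℝ)^((N+p')*N)) = 1 := by
    rw [← pow_add]
    exact Even.neg_one_pow ⟨(N+p')*N, rfl⟩
  have hpow : ((-1:Polynomial ℝ)^(p'*N)) = (-1:Polynomial ℝ)^((N+p')*N) * (-1:Polynomial ℝ)^N := by
    rw [← pow_add, show (N+p')*N + N = p'*N + N*(N+1) by ring, pow_add,
      Even.neg_one_pow (Nat.even_mul_succ_self N), mul_one]
  calc C (α N) * Q N N
      = ((-1:Polynomial ℝ)^((N+p')*N) * (-1:Polynomial ℝ)^N) * C Pi * Q N N := by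
        rw [hCα, hpow]
    _ = (-1:Polynomial ℝ)^((N+p')*N) * (Q N N * ((-1:Polynomial ℝ)^N * C Pi)) := by ring
    _ = (-1:Polynomial ℝ)^((N+p')*N) * ((-1:Polynomial ℝ)^((N+p')*N) * P N) := by rw [heq0]
    _ = P N := by rw [← mul_assoc, h1, one_mul]



/-- Properties of the determinantal polynomials `Q_{n,N}` built from the left recursion
polynomials of a `(p,q)`-banded matrix with nonvanishing extreme diagonals:
(i) `Q_{N+j,N} = 0` for `j ∈ {1,…,p−1}`; (ii) `α_N · Q_{N,N} = P_N`;
(iii) `(−1)^{p−1} · α_{N+1} · Q_{N+p,N} = P_{N+1}`. -/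
theorem determinantal_polynomials_Q_properties
    (p q : ℕ) (hp : 1 ≤ p) (hq : 1 ≤ q)
    (T : ℕ → ℕ → ℝ)
    (hband : ∀ i j, (j + p < i ∨ i + q < j) → T i j = 0)
    (hext : ∀ n, T (n + p) n ≠ 0 ∧ T n (n + q) ≠ 0)
    (ν : ℕ → ℕ → ℝ) (A : ℕ → ℕ → Polynomial ℝ)
    (hA0 : ∀ a, 1 ≤ a → a ≤ p → ∀ n, n < a - 1 → A a n = 0)
    (hA1 : ∀ a, 1 ≤ a → a ≤ p → A a (a - 1) = 1)
    (hAconst : ∀ a, 1 ≤ a → a ≤ p → ∀ j, a ≤ j → j ≤ p - 1 → A a j = Polynomial.C (ν a j))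
    (hArec : ∀ a, 1 ≤ a → a ≤ p → ∀ n,
      ∑ m ∈ Finset.Icc (n - q) (n + p), A a m * Polynomial.C (T m n)
        = Polynomial.X * A a n)
    (P : ℕ → Polynomial ℝ)
    (hP0 : P 0 = 1)
    (hPsucc : ∀ N, P (N + 1) = (Matrix.of fun i j : Fin (N + 1) => T i j).charpoly)
    (α : ℕ → ℝ)
    (hα : ∀ N, α N = (-1 : ℝ) ^ ((p - 1) * N) * ∏ k ∈ Finset.range N, T (k + p) k)
    (Q : ℕ → ℕ → Polynomial ℝ)
    (hQ : ∀ n N, Q n N = (Matrix.of fun i a : Fin p =>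
        if (i : ℕ) = 0 then A ((a : ℕ) + 1) n else A ((a : ℕ) + 1) (N + (i : ℕ))).det) :
    ∀ N : ℕ,
      (∀ j, 1 ≤ j → j ≤ p - 1 → Q (N + j) N = 0) ∧
      Polynomial.C (α N) * Q N N = P N ∧
      Polynomial.C ((-1 : ℝ) ^ (p - 1) * α (N + 1)) * Q (N + p) N = P (N + 1) := by
  obtain ⟨p', rfl⟩ : ∃ p', p = p' + 1 := ⟨p - 1, by omega⟩
  have hkey := key p' q T hband A hA0 hA1 hArec P hP0 hPsucc α hα Q hQ
  intro N
  refine ⟨?_, hkey N, ?_⟩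
  · -- (i) two equal rows
    intro j hj1 hj2
    rw [hQ]
    have hjp : j < p' + 1 := by omega
    apply Matrix.det_zero_of_row_eq (i := (⟨0, by omega⟩ : Fin (p'+1))) (j := ⟨j, hjp⟩)
    · intro hc
      have := congrArg Fin.val hc
      simp only [Fin.val_mk] at this
      omega
    · funext a
      simp only [Matrix.of_apply, Fin.val_mk]
      rw [if_true, if_neg (by omega)]
  · -- (iii) via a cyclic row permutation and (ii) at N+1
    set M : Matrix (Fin (p'+1)) (Fin (p'+1)) (Polynomial ℝ) :=
      Matrix.of fun i a => if (i:ℕ) = 0 then A ((a:ℕ)+1) (N + (p'+1))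
        else A ((a:ℕ)+1) (N + (i:ℕ)) with hM
    have hM' : (Matrix.of fun i a : Fin (p'+1) =>
        if (i:ℕ) = 0 then A ((a:ℕ)+1) (N+1) else A ((a:ℕ)+1) ((N+1) + (i:ℕ)))
        = M.submatrix (finRotate (p'+1)) id := by
      ext i a : 1
      simp only [Matrix.of_apply, Matrix.submatrix_apply, id_eq, hM]
      have hv : ((finRotate (p'+1) i : Fin (p'+1)) : ℕ) = ((i:ℕ) + 1) % (p'+1) := by
        have := rotpow_val (n := p') 1 i
        simpa [pow_one] using this
      by_cases h : (i:ℕ) = p'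
      · have h0 : ((finRotate (p'+1) i : Fin (p'+1)) : ℕ) = 0 := by
          rw [hv, h, Nat.mod_self]
        rw [if_pos h0]
        by_cases h0' : (i:ℕ) = 0
        · rw [if_pos h0']; congr 1; omega
        · rw [if_neg h0']; congr 1; omega
      · have hlt : (i:ℕ) + 1 < p' + 1 := by have := i.isLt; omega
        have h1 : ((finRotate (p'+1) i : Fin (p'+1)) : ℕ) = (i:ℕ)+1 := by
          rw [hv, Nat.mod_eq_of_lt hlt]
        have hne : ¬(((finRotate (p'+1) i : Fin (p'+1)) : ℕ) = 0) := by rw [h1]; omega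
        rw [if_neg hne, h1]
        by_cases h0' : (i:ℕ) = 0
        · rw [if_pos h0']; congr 1; omega
        · rw [if_neg h0']; congr 1; omega
    have hsig : Q (N+1) (N+1) = (-1 : Polynomial ℝ)^(p') * Q (N+(p'+1)) N := by
      rw [hQ (N+1) (N+1), hQ (N+(p'+1)) N, ← hM, hM',
        Matrix.det_permute (finRotate (p'+1)) M]
      congr 1
      rw [sign_finRotate]
      push_cast
      ring
    have hkey1 := hkey (N+1)
    rw [hsig] at hkey1
    rw [show p'+1-1 = p' by omega, _root_.map_mul, map_pow, map_neg, _root_.map_one]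
    calc ((-1:Polynomial ℝ)^p' * Polynomial.C (α (N+1))) * Q (N+(p'+1)) N
        = Polynomial.C (α (N+1)) * ((-1:Polynomial ℝ)^p' * Q (N+(p'+1)) N) := by ring
      _ = P (N+1) := hkey1
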